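/- Let A be a category with finite products and Σ a class of morphisms of A containing all identities and closed under binary products (if f, g ∈ Σ then f × g ∈ Σ). Then the localization A[Σ⁻¹] has finite products and the localization functor Q : A → A[Σ⁻¹] preserves finite products. -/

import Mathlib

open CategoryTheory CategoryTheory.Limits

universe v u

namespace Stmt2Aux

variable {A : Type u} [Category.{v} A] [HasFiniteProducts A]

/-- The product over `Option J` decomposes as a binary product. -/
noncomputable def piOptionIso {J : Type} [Fintype J] (X : Option J → A) :
    (∏ᶜ X) ≅ (X none) ⨯ (∏ᶜ fun j => X (some j)) where
  hom := prod.lift (Pi.π X none) (Pi.lift fun j => Pi.π X (some j))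
  inv := Pi.lift fun o => Option.casesOn o prod.fst (fun j => prod.snd ≫ Pi.π _ j)
  hom_inv_id := by
    apply limit.hom_ext
    rintro ⟨(_ | j)⟩ <;> simp [prod.lift_fst, prod.lift_snd, prod.lift_fst_assoc, prod.lift_snd_assoc]
  inv_hom_id := by
    apply Limits.prod.hom_ext
    · simp [prod.lift_fst, prod.lift_snd, prod.lift_fst_assoc, prod.lift_snd_assoc]
    · apply limit.hom_ext
      rintro ⟨j⟩
      simp [prod.lift_fst, prod.lift_snd, prod.lift_fst_assoc, prod.lift_snd_assoc]

lemma piOptionIso_naturality {J : Type} [Fintype J] {X₁ X₂ : Option J → A}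
    (f : ∀ o, X₁ o ⟶ X₂ o) :
    Limits.Pi.map f ≫ (piOptionIso X₂).hom =
      (piOptionIso X₁).hom ≫ prod.map (f none) (Limits.Pi.map fun j => f (some j)) := by
  apply Limits.prod.hom_ext
  · simp [piOptionIso, prod.lift_fst, prod.lift_snd, prod.lift_fst_assoc, prod.lift_snd_assoc]
  · apply limit.hom_ext
    rintro ⟨j⟩
    simp [piOptionIso, prod.lift_fst, prod.lift_snd, prod.lift_fst_assoc, prod.lift_snd_assoc]

variable (W : MorphismProperty A)

lemma isoClosure_of_isIso (hid : ∀ X : A, W (𝟙 X)) {X Y : A} (g : X ⟶ Y) [IsIso g] :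
    W.isoClosure g :=
  ⟨X, X, 𝟙 X, hid X, ⟨Arrow.isoMk (Iso.refl X) (asIso g) (by simp)⟩⟩

lemma isoClosure_prod_map
    (hprod : ∀ {X Y Z T : A} (f : X ⟶ Y) (g : Z ⟶ T), W f → W g →
      W (Limits.prod.map f g))
    {X Y Z T : A} (f : X ⟶ Y) (g : Z ⟶ T)
    (hf : W.isoClosure f) (hg : W.isoClosure g) : W.isoClosure (prod.map f g) := by
  obtain ⟨X', Y', f', hf', ⟨ef⟩⟩ := hf
  obtain ⟨Z', T', g', hg', ⟨eg⟩⟩ := hg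
  refine ⟨_, _, prod.map f' g', hprod _ _ hf' hg',
    ⟨Arrow.isoMk (prod.mapIso (Comma.leftIso ef) (Comma.leftIso eg))
      (prod.mapIso (Comma.rightIso ef) (Comma.rightIso eg)) ?_⟩⟩
  apply Limits.prod.hom_ext
  · simp [Arrow.w]
    exact _ ≫= ef.hom.w
  · simp [Arrow.w]
    exact _ ≫= eg.hom.w

lemma isoClosure_pi_map (hid : ∀ X : A, W (𝟙 X))
    (hprod : ∀ {X Y Z T : A} (f : X ⟶ Y) (g : Z ⟶ T), W f → W g →
      W (Limits.prod.map f g))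
    (J : Type) [Finite J]
    (X₁ X₂ : J → A) (f : ∀ j, X₁ j ⟶ X₂ j) (hf : ∀ j, W.isoClosure (f j)) :
    W.isoClosure (Limits.Pi.map f) := by
  have key : ∀ (J : Type), ∀ [Finite J], ∀ (X₁ X₂ : J → A) (f : ∀ j, X₁ j ⟶ X₂ j),
      (∀ j, W.isoClosure (f j)) → W.isoClosure (Limits.Pi.map f) := by
    refine fun J => Finite.induction_empty_option
      (P := fun J => ∀ [Finite J], ∀ (X₁ X₂ : J → A) (f : ∀ j, X₁ j ⟶ X₂ j),
        (∀ j, W.isoClosure (f j)) → W.isoClosure (Limits.Pi.map f)) ?_ ?_ ?_ J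
    · intro α β e hα _ X₁ X₂ f hf
      have : Finite α := Finite.of_equiv _ e.symm
      have h := hα (X₁ ∘ e) (X₂ ∘ e) (fun a => f (e a)) (fun a => hf (e a))
      refine (W.isoClosure.arrow_mk_iso_iff
        (Arrow.isoMk (Pi.reindex e X₁) (Pi.reindex e X₂) ?_)).1 h
      apply limit.hom_ext
      rintro ⟨b⟩
      obtain ⟨a, rfl⟩ := e.surjective b
      simp
    · intro _ X₁ X₂ f hf
      have : IsIso (Limits.Pi.map f) := by
        refine ⟨Pi.lift (fun j => j.elim), ?_, ?_⟩ <;>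
          · apply limit.hom_ext; rintro ⟨⟨⟩⟩
      exact isoClosure_of_isIso W hid _
    · intro α _ hα _ X₁ X₂ f hf
      have h := isoClosure_prod_map W hprod (f none) (Limits.Pi.map fun j => f (some j))
        (hf none) (hα _ _ _ (fun j => hf (some j)))
      refine (W.isoClosure.arrow_mk_iso_iff
        (Arrow.isoMk (piOptionIso X₁) (piOptionIso X₂) ?_)).2 h
      exact (piOptionIso_naturality f).symm
  exact key J X₁ X₂ f hf

end Stmt2Aux

/-- Let `A` be a category with finite products and `W` a class of morphisms containing all
identities and closed under binary products. Then the category of fractions `A[W⁻¹]` has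
finite products and the localization functor `Q : A ⥤ A[W⁻¹]` preserves them. -/
theorem stmt2 {A : Type u} [Category.{v} A] [HasFiniteProducts A]
    (W : MorphismProperty A)
    (hid : ∀ X : A, W (𝟙 X))
    (hprod : ∀ {X Y Z T : A} (f : X ⟶ Y) (g : Z ⟶ T), W f → W g →
      W (Limits.prod.map f g)) :
    HasFiniteProducts W.Localization ∧ PreservesFiniteProducts W.Q := by
  haveI : W.isoClosure.ContainsIdentities := ⟨fun X => W.le_isoClosure _ (hid X)⟩
  haveI : W.Q.IsLocalization W.isoClosure :=
    Functor.IsLocalization.of_equivalence_source W.Q W W.Q W.isoClosure (CategoryTheory.Equivalence.refl)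
      (fun _ _ f hf => W.isoClosure.le_isoClosure _ (W.le_isoClosure _ hf))
      ((MorphismProperty.IsInvertedBy.isoClosure_iff W W.Q).2 (Localization.inverts W.Q W))
      (Functor.leftUnitor _)
  haveI : W.isoClosure.IsStableUnderFiniteProducts :=
    ⟨fun J _ => MorphismProperty.IsStableUnderProductsOfShape.mk (W := W.isoClosure) J
      (fun X₁ X₂ _ _ f hf => Stmt2Aux.isoClosure_pi_map W hid hprod J X₁ X₂ f hf)⟩
  exact ⟨Localization.hasFiniteProducts W.Q W.isoClosure,
    Localization.preservesFiniteProducts W.Q W.isoClosure⟩
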